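/- Let m_1, m_2, m_3 ∈ ℤ² be nonzero vectors, no two of which are parallel, and let w_1, w_2, w_3 be nonzero integers with gcd(w_1, w_2, w_3) = 1 and w_1·m_1 + w_2·m_2 + w_3·m_3 = (0,0). Suppose z_1, z_2, z_3 ∈ ℤ² are pairwise distinct points such that z_2 − z_1 = a·m_1, z_3 − z_1 = b·m_2, and z_3 − z_2 = e·m_3 for some nonzero integers a, b, e. Then there exists a nonzero integer t such that a = t·w_1, b = −t·w_2, and e = t·w_3. In particular, every integral triangle with edge directions m_1, m_2, m_3 is an integer multiple of the smallest one, whose edge vectors are w_1·m_1, −w_2·m_2, and w_3·m_3. -/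
import Mathlib


/-- Two integer vectors are parallel if one is a rational scalar multiple of the other. -/
def IntPara (a b : ℤ × ℤ) : Prop :=
  (∃ r : ℚ, (b.1 : ℚ) = r * a.1 ∧ (b.2 : ℚ) = r * a.2) ∨
  (∃ r : ℚ, (a.1 : ℚ) = r * b.1 ∧ (a.2 : ℚ) = r * b.2)

lemma indep_of_not_para (m n : ℤ × ℤ) (hm : m ≠ 0) (h : ¬ IntPara m n)
    (x y : ℤ) (h1 : x * m.1 + y * n.1 = 0) (h2 : x * m.2 + y * n.2 = 0) :
    x = 0 ∧ y = 0 := by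
  rcases eq_or_ne y 0 with hy | hy
  · subst hy
    simp only [mul_zero, zero_mul, add_zero] at h1 h2
    rcases eq_or_ne x 0 with hx | hx
    · exact ⟨hx, rfl⟩
    · exfalso; apply hm
      have e1 : m.1 = 0 := by
        rcases mul_eq_zero.mp h1 with h | h
        · exact absurd h hx
        · exact h
      have e2 : m.2 = 0 := by
        rcases mul_eq_zero.mp h2 with h | h
        · exact absurd h hx
        · exact h
      exact Prod.ext e1 e2
  · exfalso; apply h
    left
    refine ⟨(-x : ℚ) / (y : ℚ), ?_, ?_⟩
    · have h1' : (x : ℚ) * m.1 + y * n.1 = 0 := by exact_mod_cast congrArg (Int.cast : ℤ → ℚ) h1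
      field_simp
      linarith
    · have h2' : (x : ℚ) * m.2 + y * n.2 = 0 := by exact_mod_cast congrArg (Int.cast : ℤ → ℚ) h2
      field_simp
      linarith

theorem stmt11 (m1 m2 m3 : ℤ × ℤ) (h1 : m1 ≠ 0) (h2 : m2 ≠ 0) (h3 : m3 ≠ 0)
    (h12 : ¬ IntPara m1 m2) (h13 : ¬ IntPara m1 m3) (h23 : ¬ IntPara m2 m3)
    (w1 w2 w3 : ℤ) (hw1 : w1 ≠ 0) (hw2 : w2 ≠ 0) (hw3 : w3 ≠ 0)
    (hgcd : Int.gcd w1 (Int.gcd w2 w3) = 1)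
    (hsum : w1 • m1 + w2 • m2 + w3 • m3 = 0)
    (z1 z2 z3 : ℤ × ℤ) (hz12 : z1 ≠ z2) (hz13 : z1 ≠ z3) (hz23 : z2 ≠ z3)
    (a b e : ℤ) (ha : a ≠ 0) (hb : b ≠ 0) (he : e ≠ 0)
    (hΔ1 : z2 - z1 = a • m1) (hΔ2 : z3 - z1 = b • m2) (hΔ3 : z3 - z2 = e • m3) :
    ∃ t : ℤ, t ≠ 0 ∧ a = t * w1 ∧ b = -(t * w2) ∧ e = t * w3 := by
  -- component equations
  have hrel : a • m1 + e • m3 = b • m2 := by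
    rw [← hΔ1, ← hΔ3, ← hΔ2]; abel
  have hr1 : a * m1.1 + e * m3.1 = b * m2.1 := congrArg Prod.fst hrel
  have hr2 : a * m1.2 + e * m3.2 = b * m2.2 := congrArg Prod.snd hrel
  have hs1 : w1 * m1.1 + w2 * m2.1 + w3 * m3.1 = 0 := congrArg Prod.fst hsum
  have hs2 : w1 * m1.2 + w2 * m2.2 + w3 * m3.2 = 0 := congrArg Prod.snd hsum
  -- eliminate m3: (w3*a - e*w1) m1 + (-w3*b - e*w2) m2 = 0
  have e12 := indep_of_not_para m1 m2 h1 h12 (w3 * a - e * w1) (-(w3 * b) - e * w2)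
    (by linear_combination w3 * hr1 - e * hs1) (by linear_combination w3 * hr2 - e * hs2)
  -- eliminate m1: (a*w2 + b*w1) m2 + (a*w3 - e*w1) m3 = 0
  have e23 := indep_of_not_para m2 m3 h2 h23 (a * w2 + b * w1) (a * w3 - e * w1)
    (by linear_combination a * hs1 - w1 * hr1) (by linear_combination a * hs2 - w1 * hr2)
  have hA : a * w2 + b * w1 = 0 := e23.1
  have hB : a * w3 - e * w1 = 0 := e23.2
  have hC : w3 * b + e * w2 = 0 := by linear_combination -e12.2
  -- Bezout
  set g : ℤ := (Int.gcd w2 w3 : ℤ) with hg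
  have hbez1 : (Int.gcd w1 g : ℤ) = w1 * Int.gcdA w1 g + g * Int.gcdB w1 g :=
    Int.gcd_eq_gcd_ab w1 g
  have hbez2 : (g : ℤ) = w2 * Int.gcdA w2 w3 + w3 * Int.gcdB w2 w3 := Int.gcd_eq_gcd_ab w2 w3
  set u : ℤ := Int.gcdA w1 g
  set v : ℤ := Int.gcdA w2 w3 * Int.gcdB w1 g
  set s : ℤ := Int.gcdB w2 w3 * Int.gcdB w1 g
  have hone : w1 * u + w2 * v + w3 * s = 1 := by
    have : (Int.gcd w1 g : ℤ) = 1 := by rw [hgcd]; norm_num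
    rw [this] at hbez1
    linear_combination -hbez1 - Int.gcdB w1 g * hbez2
  refine ⟨u * a - v * b + s * e, ?_, ?_, ?_, ?_⟩
  · intro ht
    apply ha
    have : a = (u * a - v * b + s * e) * w1 := by
      linear_combination -a * hone + v * hA + s * hB
    rw [this, ht, zero_mul]
  · linear_combination -a * hone + v * hA + s * hB
  · linear_combination -b * hone + u * hA + s * hC
  · linear_combination -e * hone - u * hB + v * hC
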